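/- Let S = {ψ_j = ⊗_{i=1}^m φ_{i,j}} be an orthogonal product basis in H = ⊗_i H_i with dim H_i = d_i. Then S is extendible (some nonzero product vector in H is orthogonal to all of S) if and only if there exists a partition of S into m disjoint subsets S_1,...,S_m such that for every i, the span of {φ_{i,j} : ψ_j ∈ S_i} has dimension strictly less than d_i. -/

import Mathlib

/-- Partition criterion for extendibility: an orthogonal product basis
S = {ψ_j = ⊗_i φ_{i,j}} in ⊗_i ℂ^{d_i} is extendible (some nonzero product vector
is orthogonal to all of S) iff there is a partition of S into m subsets
S_i = {j | P j = i} such that for every party i the span of {φ_{i,j} : j ∈ S_i}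
has dimension strictly less than d_i. -/
theorem stmt5 (m n : ℕ) (d : Fin m → ℕ) (hd : ∀ i, 0 < d i)
    (φ : (i : Fin m) → Fin n → EuclideanSpace ℂ (Fin (d i)))
    (hne : ∀ i j, φ i j ≠ 0)
    (horth : ∀ j k : Fin n, j ≠ k → ∃ i, (inner ℂ (φ i j) (φ i k) : ℂ) = 0) :
    (∃ χ : (i : Fin m) → EuclideanSpace ℂ (Fin (d i)),
        (∀ i, χ i ≠ 0) ∧ ∀ j, ∃ i, (inner ℂ (χ i) (φ i j) : ℂ) = 0)
    ↔ ∃ P : Fin n → Fin m, ∀ i,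
        Module.finrank ℂ (Submodule.span ℂ ((φ i) '' {j | P j = i})) < d i := by
  constructor
  · rintro ⟨χ, hχ, hort⟩
    choose P hP using hort
    refine ⟨P, fun i => ?_⟩
    set K : Submodule ℂ (EuclideanSpace ℂ (Fin (d i))) :=
      Submodule.span ℂ ((φ i) '' {j | P j = i})
    have hsub : K ≤ (ℂ ∙ χ i)ᗮ := by
      rw [Submodule.span_le]
      rintro _ ⟨j, hj, rfl⟩
      simp only [SetLike.mem_coe, Submodule.mem_orthogonal_singleton_iff_inner_left]
      have := hP j
      rw [hj] at this
      rw [← inner_conj_symm, this, map_zero]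
    have h1 : Module.finrank ℂ K ≤ Module.finrank ℂ (ℂ ∙ χ i)ᗮ :=
      Submodule.finrank_mono hsub
    have h2 : Module.finrank ℂ (ℂ ∙ χ i) + Module.finrank ℂ (ℂ ∙ χ i)ᗮ = d i := by
      rw [Submodule.finrank_add_finrank_orthogonal, finrank_euclideanSpace_fin]
    have h3 : Module.finrank ℂ (ℂ ∙ χ i) = 1 := finrank_span_singleton (hχ i)
    omega
  · rintro ⟨P, hP⟩
    have key : ∀ i, ∃ x ∈ (Submodule.span ℂ ((φ i) '' {j | P j = i}))ᗮ, x ≠ 0 := by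
      intro i
      set K : Submodule ℂ (EuclideanSpace ℂ (Fin (d i))) :=
        Submodule.span ℂ ((φ i) '' {j | P j = i})
      have h2 : Module.finrank ℂ K + Module.finrank ℂ Kᗮ = d i := by
        rw [Submodule.finrank_add_finrank_orthogonal, finrank_euclideanSpace_fin]
      have hpos : 0 < Module.finrank ℂ Kᗮ := by
        have hPi : Module.finrank ℂ K < d i := hP i
        omega
      have hne' : Kᗮ ≠ ⊥ := by
        intro h
        rw [h, finrank_bot] at hpos
        exact Nat.lt_irrefl 0 hpos
      exact Submodule.exists_mem_ne_zero_of_ne_bot hne'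
    choose χ hmem hχ using key
    refine ⟨χ, hχ, fun j => ⟨P j, ?_⟩⟩
    have : φ (P j) j ∈ Submodule.span ℂ ((φ (P j)) '' {k | P k = P j}) :=
      Submodule.subset_span ⟨j, rfl, rfl⟩
    have h0 := (Submodule.mem_orthogonal _ _).mp (hmem (P j)) _ this
    rw [← inner_conj_symm, h0, map_zero]
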